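/- If X is a strictly convex normed space of dimension ≥ 2, then the map sending a nonzero vector z to its Birkhoff–James orthogonality set N_z = {v : z ⊥ v} is injective on lines: if z₁, z₂ are linearly independent nonzero vectors then N_{z₁} ≠ N_{z₂}. -/

import Mathlib

private theorem strict_orth {𝕜 X : Type*} [RCLike 𝕜] [NormedAddCommGroup X] [NormedSpace 𝕜 X]
    (hsc : ∀ u v : X, ‖u‖ = 1 → ‖v‖ = 1 → u ≠ v → ‖u + v‖ < 2)
    {x y : X} (horth : ∀ l : 𝕜, ‖x + l • y‖ ≥ ‖x‖) (hx : x ≠ 0) {t : 𝕜}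
    (hty : t • y ≠ 0) : ‖x‖ < ‖x + t • y‖ := by
  rcases lt_or_eq_of_le (horth t) with h | h
  · exact h
  · exfalso
    have ha : (0:ℝ) < ‖x‖ := norm_pos_iff.mpr hx
    set a : ℝ := ‖x‖ with ha_def
    set c : 𝕜 := ((a : 𝕜))⁻¹ with hc_def
    have hca : ‖c‖ = a⁻¹ := by
      rw [hc_def, norm_inv, RCLike.norm_ofReal, abs_of_pos ha]
    have hc0 : c ≠ 0 := by
      simp [hc_def, RCLike.ofReal_eq_zero, ne_of_gt ha]
    have hu : ‖c • x‖ = 1 := by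
      rw [norm_smul, hca]; field_simp; exact ha_def.symm
    have hw : ‖c • (x + t • y)‖ = 1 := by
      rw [norm_smul, hca, ← h]; field_simp
    have hne : c • x ≠ c • (x + t • y) := by
      intro hcontra
      apply hty
      have := smul_right_injective X hc0 hcontra
      have : x + t • y - x = 0 := by rw [← this]; abel
      simpa using this
    have hlt := hsc _ _ hu hw hne
    have hsum : c • x + c • (x + t • y) = c • (x + x + t • y) := by
      rw [← smul_add]; congr 1; abel
    rw [hsum, norm_smul, hca] at hlt
    have hkey : x + x + t • y = (2 : 𝕜) • (x + (t / 2) • y) := by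
      module
    have h2 : ‖x + x + t • y‖ ≥ 2 * a := by
      rw [hkey, norm_smul]
      have : ‖(2:𝕜)‖ = 2 := by norm_num
      rw [this]
      have := horth (t / 2)
      linarith
    have : a⁻¹ * (2 * a) ≤ a⁻¹ * ‖x + x + t • y‖ := by
      apply mul_le_mul_of_nonneg_left h2 (by positivity)
    have h5 : a⁻¹ * (2 * a) = 2 := by field_simp
    linarith

theorem stmt_12 {𝕜 X : Type*} [RCLike 𝕜] [NormedAddCommGroup X] [NormedSpace 𝕜 X]
    (hdim : (2 : Cardinal) ≤ Module.rank 𝕜 X)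
    (hsc : ∀ u v : X, ‖u‖ = 1 → ‖v‖ = 1 → u ≠ v → ‖u + v‖ < 2)
    {z₁ z₂ : X} (hli : LinearIndependent 𝕜 ![z₁, z₂]) :
    {v : X | ∀ l : 𝕜, ‖z₁ + l • v‖ ≥ ‖z₁‖} ≠ {v : X | ∀ l : 𝕜, ‖z₂ + l • v‖ ≥ ‖z₂‖} := by
  intro heq
  rw [linearIndependent_fin2] at hli
  simp only [Matrix.cons_val_one, Matrix.head_cons, Matrix.cons_val_zero] at hli
  obtain ⟨hz₂, hindep⟩ := hli
  have hz₁ : z₁ ≠ 0 := fun h => hindep 0 (by simp [h])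
  have ha : (0:ℝ) < ‖z₁‖ := norm_pos_iff.mpr hz₁
  obtain ⟨f, hf1, hfz⟩ := exists_dual_vector 𝕜 z₁ ha.ne'
  set c : 𝕜 := f z₂ / (‖z₁‖ : 𝕜) with hc_def
  set v : X := z₂ - c • z₁ with hv_def
  have hfv : f v = 0 := by
    have hne : ((‖z₁‖ : ℝ) : 𝕜) ≠ 0 := by
      simp [RCLike.ofReal_eq_zero, ne_of_gt ha]
    rw [hv_def, map_sub, map_smul, hfz, hc_def]
    rw [smul_eq_mul, div_mul_cancel₀ _ hne, sub_self]
  have horth : ∀ l : 𝕜, ‖z₁ + l • v‖ ≥ ‖z₁‖ := by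
    intro l
    have hb : ‖f (z₁ + l • v)‖ ≤ ‖f‖ * ‖z₁ + l • v‖ := f.le_opNorm _
    rw [hf1, one_mul] at hb
    rw [map_add, map_smul, hfv, hfz] at hb
    simpa using hb
  have hmem : v ∈ {v : X | ∀ l : 𝕜, ‖z₁ + l • v‖ ≥ ‖z₁‖} := horth
  rw [heq] at hmem
  have horth₂ : ∀ l : 𝕜, ‖z₂ + l • v‖ ≥ ‖z₂‖ := hmem
  have hz2v : z₂ ≠ 0 := hz₂
  have hc0 : c ≠ 0 := by
    intro h
    have hveq : v = z₂ := by rw [hv_def, h]; simp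
    have := horth₂ (-1)
    rw [hveq] at this
    simp at this
    exact hz2v (by simpa using this)
  have hv0 : v ≠ 0 := by
    intro h
    have : z₂ = c • z₁ := by
      have := sub_eq_zero.mp (hv_def ▸ h)
      exact this
    exact hindep c⁻¹ (by rw [this, smul_smul, inv_mul_cancel₀ hc0, one_smul])
  -- strictness: ‖z₁ + c⁻¹ • v‖ > ‖z₁‖
  have hstrict : ‖z₁‖ < ‖z₁ + c⁻¹ • v‖ :=
    strict_orth hsc horth hz₁ (by simp [smul_eq_zero, hc0, hv0])
  -- multiply by ‖c‖
  have hmul : ‖c‖ * ‖z₁‖ < ‖c‖ * ‖z₁ + c⁻¹ • v‖ :=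
    mul_lt_mul_of_pos_left hstrict (norm_pos_iff.mpr hc0)
  have h1 : ‖c‖ * ‖z₁ + c⁻¹ • v‖ = ‖c • z₁ + v‖ := by
    rw [← norm_smul, smul_add, smul_smul, mul_inv_cancel₀ hc0, one_smul]
  have h2 : c • z₁ + v = z₂ := by rw [hv_def]; abel
  have h3 : ‖c‖ * ‖z₁‖ = ‖c • z₁‖ := (norm_smul c z₁).symm
  have h4 : c • z₁ = z₂ - v := by rw [hv_def]; abel
  rw [h1, h2, h3, h4] at hmul
  -- but orthogonality gives ‖z₂ - v‖ ≥ ‖z₂‖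
  have := horth₂ (-1)
  simp only [neg_one_smul, ← sub_eq_add_neg] at this
  linarith
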